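/- Let Γ = (A, B, E) be a bipartite graph with |E| ≥ γ|A||B|, and let s be a positive integer. If b_1,...,b_s are chosen independently and uniformly at random from B, then the expected size of the common neighborhood of b_1,...,b_s in A is at least γ^s·|A|. -/
import Mathlib


open Finset

/-- dependent random choice, first moment: if a bipartite graph between
`A` and `B` has at least `γ|A||B|` edges, then the expected size of the common
neighborhood of `s` independent uniform vertices of `B` is at least `γ^s|A|`. -/
theorem drc_expected_common_neighborhood {A B : Type*} [Fintype A] [Fintype B]
    [Nonempty A] [Nonempty B] (R : A → B → Prop) (γ : ℝ) (hγ0 : 0 < γ) (hγ1 : γ ≤ 1)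
    (s : ℕ) (hs : 0 < s)
    (hE : γ * (Fintype.card A : ℝ) * (Fintype.card B : ℝ)
      ≤ (Nat.card {p : A × B // R p.1 p.2} : ℝ)) :
    γ ^ s * (Fintype.card A : ℝ)
      ≤ (∑ b : Fin s → B, (Nat.card {a : A // ∀ i, R a (b i)} : ℝ))
          / ((Fintype.card B : ℝ)) ^ s := by
  classical
  set dA : ℝ := (Fintype.card A : ℝ) with hdA
  set dB : ℝ := (Fintype.card B : ℝ) with hdB
  have hdA0 : 0 < dA := by positivity
  have hdB0 : 0 < dB := by positivity
  -- degree function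
  set d : A → ℕ := fun a => Nat.card {b : B // R a b} with hd
  -- edge count as sum of degrees
  have hedge : (Nat.card {p : A × B // R p.1 p.2} : ℕ) = ∑ a : A, d a := by
    simp only [Nat.card_eq_fintype_card, hd, Fintype.card_subtype]
    simp only [Finset.card_filter]
    rw [Fintype.sum_prod_type]
  -- main counting identity
  have hcount : (∑ b : Fin s → B, (Nat.card {a : A // ∀ i, R a (b i)} : ℕ))
      = ∑ a : A, (d a) ^ s := by
    have h1 : ∀ a : A, (d a) ^ s = Nat.card {f : Fin s → B // ∀ i, R a (f i)} := by
      intro a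
      rw [Nat.card_congr (Equiv.subtypePiEquivPi (p := fun (_ : Fin s) b => R a b)),
        Nat.card_pi]
      simp [hd]
    simp only [h1, Nat.card_eq_fintype_card, Fintype.card_subtype, Finset.card_filter]
    exact Finset.sum_comm
  -- sum of degrees lower bound
  have hsum : γ * dA * dB ≤ ∑ a : A, (d a : ℝ) := by
    calc γ * dA * dB ≤ (Nat.card {p : A × B // R p.1 p.2} : ℝ) := hE
      _ = ∑ a : A, (d a : ℝ) := by rw [hedge]; push_cast; ring
  -- Jensen / power mean
  have hjensen : (∑ a : A, (d a : ℝ)) ^ s / dA ^ (s - 1) ≤ ∑ a : A, (d a : ℝ) ^ s := by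
    have := pow_sum_div_card_le_sum_pow (s := (Finset.univ : Finset A))
      (f := fun a => (d a : ℝ)) (fun i _ => by positivity) (s - 1)
    rwa [Nat.sub_add_cancel hs, Finset.card_univ] at this
  have hpow : γ ^ s * dA * dB ^ s ≤ (∑ a : A, (d a : ℝ)) ^ s / dA ^ (s - 1) := by
    rw [le_div_iff₀ (by positivity)]
    have hAs : dA ^ s = dA * dA ^ (s - 1) := by
      rw [← pow_succ', Nat.sub_add_cancel hs]
    calc γ ^ s * dA * dB ^ s * dA ^ (s - 1) = (γ * dA * dB) ^ s := by
          rw [mul_pow, mul_pow, hAs]; ring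
      _ ≤ (∑ a : A, (d a : ℝ)) ^ s := pow_le_pow_left₀ (by positivity) hsum s
  rw [le_div_iff₀ (by positivity)]
  calc γ ^ s * dA * dB ^ s ≤ (∑ a : A, (d a : ℝ)) ^ s / dA ^ (s - 1) := hpow
    _ ≤ ∑ a : A, (d a : ℝ) ^ s := hjensen
    _ = ∑ b : Fin s → B, (Nat.card {a : A // ∀ i, R a (b i)} : ℝ) := by
        exact_mod_cast congrArg (fun n : ℕ => (n : ℝ)) hcount.symm
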